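/- Let q = 6 + 2√5, σ = (1/√q)·[[1, q−1],[1, −1]] and τ = [[1, 0],[0, −1]]. Let W(x,y) ∈ ℂ[x,y] be invariant under both σ and τ, of even degree n = 2(5μ + ν) with μ ≥ 0 and 0 ≤ ν ≤ 4, and of the form x^n + Σ_{i≥1} A_i x^{n−i} y^i. Then there exist complex numbers a₀, …, a_μ such that W(x,y) = Σ_{r=0}^{μ} a_r · W_{2,q}(x,y)^{5μ+ν−5r} · W′₁₀(x,y)^r, where W′₁₀(x,y) = (ψ₅(x,y)² − W_{2,q}(x,y)⁵)/(25(5+2√5)) = y²(x²−y²)²(x²−(9+4√5)y²)². -/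

import Mathlib

/- STATEMENT 9: if W ∈ ℂ[x,y] is invariant under σ (q = 6+2√5) and τ, of even
degree n = 2(5μ+ν) with 0 ≤ ν ≤ 4, and of the form x^n + ∑_{i≥1} A_i x^{n-i}y^i,
then W = ∑_{r=0}^μ a_r W_{2,q}^{5μ+ν-5r} W′₁₀^r for some complex numbers a_r,
where W′₁₀ = (ψ₅² - W_{2,q}⁵)/(25(5+2√5)) = y²(x²-y²)²(x²-(9+4√5)y²)². -/

noncomputable section

abbrev Cxy : Type := MvPolynomial (Fin 2) ℂ

def qval : ℝ := 6 + 2 * Real.sqrt 5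

def sigmaMat : Matrix (Fin 2) (Fin 2) ℝ :=
  (Real.sqrt qval)⁻¹ • !![1, qval - 1; 1, -1]

def tauMat : Matrix (Fin 2) (Fin 2) ℝ := !![1, 0; 0, -1]

/-- The action `f^M(x,y) = f(ax+by, cx+dy)` of a 2×2 real matrix on ℂ[x,y]. -/
def act (M : Matrix (Fin 2) (Fin 2) ℝ) (f : Cxy) : Cxy :=
  MvPolynomial.aeval
    ![MvPolynomial.C ((M 0 0 : ℂ)) * MvPolynomial.X 0 + MvPolynomial.C ((M 0 1 : ℂ)) * MvPolynomial.X 1,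
      MvPolynomial.C ((M 1 0 : ℂ)) * MvPolynomial.X 0 + MvPolynomial.C ((M 1 1 : ℂ)) * MvPolynomial.X 1] f

def sqrt5C : ℂ := (Real.sqrt 5 : ℝ)

def W2q : Cxy :=
  MvPolynomial.X 0 ^ 2 + MvPolynomial.C (5 + 2 * sqrt5C) * MvPolynomial.X 1 ^ 2

def psi5 : Cxy :=
  MvPolynomial.X 0 ^ 5
    - MvPolynomial.C (50 + 20 * sqrt5C) * MvPolynomial.X 0 ^ 3 * MvPolynomial.X 1 ^ 2
    + MvPolynomial.C (225 + 100 * sqrt5C) * MvPolynomial.X 0 * MvPolynomial.X 1 ^ 4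

def W10' : Cxy := MvPolynomial.C ((25 * (5 + 2 * sqrt5C))⁻¹) * (psi5 ^ 2 - W2q ^ 5)


namespace Inv9

open MvPolynomial

def γC : ℂ := Complex.I * ((Real.sqrt (5 + 2 * Real.sqrt 5) : ℝ) : ℂ)
def c5 : ℂ := 1 + sqrt5C
def lam : ℂ := (1 - γC) / c5
def lam' : ℂ := (1 + γC) / c5

lemma hs5 : sqrt5C ^ 2 = 5 := by
  unfold sqrt5C
  rw [← Complex.ofReal_pow, Real.sq_sqrt (by norm_num : (0:ℝ) ≤ 5)]
  norm_num

lemma sqrt5_nonneg : (0:ℝ) ≤ Real.sqrt 5 := Real.sqrt_nonneg 5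

lemma hγ : γC ^ 2 = -(5 + 2 * sqrt5C) := by
  have h : (0:ℝ) ≤ 5 + 2 * Real.sqrt 5 := by positivity
  have := Real.sq_sqrt h
  unfold γC sqrt5C
  rw [mul_pow, Complex.I_sq]
  rw [← Complex.ofReal_pow, this]
  push_cast
  ring

lemma hγ0 : γC ≠ 0 := by
  unfold γC
  have h : (0:ℝ) < 5 + 2 * Real.sqrt 5 := by positivity
  have := Real.sqrt_pos.mpr h
  simp [Complex.I_ne_zero, Complex.ofReal_ne_zero, this.ne']

lemma hc5 : c5 ≠ 0 := by
  unfold c5 sqrt5C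
  rw [show (1 : ℂ) + (Real.sqrt 5 : ℝ) = ((1 + Real.sqrt 5 : ℝ) : ℂ) by push_cast; ring]
  rw [Complex.ofReal_ne_zero]
  positivity

lemma sqrt_qval : Real.sqrt qval = 1 + Real.sqrt 5 := by
  have h5 : Real.sqrt 5 ^ 2 = 5 := Real.sq_sqrt (by norm_num)
  have : qval = (1 + Real.sqrt 5) ^ 2 := by unfold qval; nlinarith [h5]
  rw [this, Real.sqrt_sq (by positivity)]

lemma num_mul : (1 - γC) * (1 + γC) = c5 * c5 := by
  unfold c5
  linear_combination -hγ - hs5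

lemma lam_mul : lam * lam' = 1 := by
  unfold lam lam'
  rw [div_mul_div_comm, num_mul, div_self (mul_ne_zero hc5 hc5)]

lemma num_pow5 : (1 - γC) ^ 5 = c5 ^ 5 := by
  unfold c5
  linear_combination (-γC^3 + 5*γC^2 + (-5 + 2*sqrt5C)*γC + (-15 - 10*sqrt5C)) * hγ
    + (-4*γC - sqrt5C^3 - 5*sqrt5C^2 - 15*sqrt5C - 15) * hs5

lemma lam5 : lam ^ 5 = 1 := by
  unfold lam
  rw [div_pow, num_pow5, div_self (pow_ne_zero _ hc5)]

lemma lam_ne : lam ≠ 1 := by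
  unfold lam
  intro h
  rw [div_eq_iff hc5, one_mul] at h
  have hγeq : γC = -sqrt5C := by unfold c5 at h; linear_combination -h
  have him : γC.im = 0 := by rw [hγeq]; simp [sqrt5C]
  rw [γC, Complex.mul_im] at him
  simp only [Complex.I_re, Complex.I_im, Complex.ofReal_im, Complex.ofReal_re] at him
  have h0 : (0:ℝ) < Real.sqrt (5 + 2 * Real.sqrt 5) := Real.sqrt_pos.mpr (by positivity)
  simp at him
  exact absurd him h0.ne'

lemma lam_order : orderOf lam = 5 := by
  haveI : Fact (Nat.Prime 5) := ⟨by norm_num⟩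
  exact orderOf_eq_prime lam5 lam_ne

lemma lam_pow_eq_one_iff (t : ℕ) : lam ^ t = 1 ↔ 5 ∣ t := by
  rw [← lam_order, orderOf_dvd_iff_pow_eq_one]

open MvPolynomial

-- matrix entry casts
lemma sig00 : ((sigmaMat 0 0 : ℝ) : ℂ) = c5⁻¹ := by
  simp [sigmaMat, sqrt_qval, c5, sqrt5C]
lemma sig01 : ((sigmaMat 0 1 : ℝ) : ℂ) = (5 + 2 * sqrt5C) * c5⁻¹ := by
  have h : sigmaMat 0 1 = (Real.sqrt qval)⁻¹ * (qval - 1) := by simp [sigmaMat]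
  rw [h, sqrt_qval]
  unfold qval c5 sqrt5C
  push_cast
  ring
lemma sig10 : ((sigmaMat 1 0 : ℝ) : ℂ) = c5⁻¹ := by
  simp [sigmaMat, sqrt_qval, c5, sqrt5C]
lemma sig11 : ((sigmaMat 1 1 : ℝ) : ℂ) = -c5⁻¹ := by
  have h : sigmaMat 1 1 = -(Real.sqrt qval)⁻¹ := by simp [sigmaMat]
  rw [h, sqrt_qval]
  unfold c5 sqrt5C
  push_cast
  ring

def l1 : Cxy := X 0 + C γC * X 1
def l2 : Cxy := X 0 - C γC * X 1

def J : Cxy →ₐ[ℂ] Cxy := aeval ![l1, l2]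
def Kk : Cxy →ₐ[ℂ] Cxy :=
  aeval ![C (2⁻¹ : ℂ) * (X 0 + X 1), C ((2 * γC)⁻¹) * (X 0 - X 1)]
def Stau : Cxy →ₐ[ℂ] Cxy := aeval ![X 1, X 0]
def Ssig : Cxy →ₐ[ℂ] Cxy := aeval ![C lam' * X 1, C lam * X 0]
def Srho : Cxy →ₐ[ℂ] Cxy := aeval ![C lam * X 0, C lam' * X 1]

def actHom (M : Matrix (Fin 2) (Fin 2) ℝ) : Cxy →ₐ[ℂ] Cxy :=
  aeval ![C ((M 0 0 : ℂ)) * X 0 + C ((M 0 1 : ℂ)) * X 1,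
          C ((M 1 0 : ℂ)) * X 0 + C ((M 1 1 : ℂ)) * X 1]

lemma act_eq (M : Matrix (Fin 2) (Fin 2) ℝ) (f : Cxy) : act M f = actHom M f := rfl

lemma C2 : (2 : Cxy) = C (2 : ℂ) := by
  rw [map_ofNat]

lemma JK : J.comp Kk = AlgHom.id ℂ Cxy := by
  have h2 : (C (2⁻¹ : ℂ) : Cxy) * 2 = 1 := by
    rw [C2, ← map_mul]; norm_num
  have hb : (C ((2 * γC)⁻¹ : ℂ) : Cxy) * (2 * C γC) = 1 := by
    rw [C2, ← map_mul, ← map_mul, inv_mul_cancel₀ (mul_ne_zero two_ne_zero hγ0), map_one]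
  apply algHom_ext
  rw [Fin.forall_fin_two]
  constructor <;>
    simp only [AlgHom.comp_apply, AlgHom.id_apply, J, Kk, aeval_X, map_mul, map_add, map_sub,
      Matrix.cons_val_zero, Matrix.cons_val_one, Matrix.head_cons, aeval_C, algebraMap_eq, l1, l2]
  · linear_combination (X 0 : Cxy) * h2
  · linear_combination (X 1 : Cxy) * hb

lemma KJ : Kk.comp J = AlgHom.id ℂ Cxy := by
  have h2 : (C (2⁻¹ : ℂ) : Cxy) * 2 = 1 := by
    rw [C2, ← map_mul]; norm_num
  have hA : (C γC : Cxy) * C ((2 * γC)⁻¹) = C (2⁻¹ : ℂ) := by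
    rw [← map_mul]
    congr 1
    rw [mul_inv, ← mul_assoc, mul_comm γC, mul_assoc, mul_inv_cancel₀ hγ0, mul_one]
  apply algHom_ext
  rw [Fin.forall_fin_two]
  constructor <;>
    simp only [AlgHom.comp_apply, AlgHom.id_apply, J, Kk, aeval_X, map_mul, map_add, map_sub,
      Matrix.cons_val_zero, Matrix.cons_val_one, Matrix.head_cons, aeval_C, algebraMap_eq, l1, l2]
  · rw [show (C γC : Cxy) * (C ((2 * γC)⁻¹) * (X 0 - X 1)) =
      C γC * C ((2 * γC)⁻¹) * (X 0 - X 1) by ring, hA]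
    linear_combination (X 0 : Cxy) * h2
  · rw [show (C γC : Cxy) * (C ((2 * γC)⁻¹) * (X 0 - X 1)) =
      C γC * C ((2 * γC)⁻¹) * (X 0 - X 1) by ring, hA]
    linear_combination (X 1 : Cxy) * h2

lemma J_inj : Function.Injective (J : Cxy →ₐ[ℂ] Cxy) := by
  intro f g h
  have := congrArg Kk h
  simpa [← AlgHom.comp_apply, KJ] using this

lemma e1 : c5⁻¹ + γC * c5⁻¹ = lam' := by
  unfold lam'
  field_simp [hc5]

lemma e2 : (5 + 2 * sqrt5C) * c5⁻¹ + γC * (-c5⁻¹) = -(lam' * γC) := by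
  unfold lam'
  field_simp [hc5]
  linear_combination hγ

lemma e3 : c5⁻¹ - γC * c5⁻¹ = lam := by
  unfold lam
  field_simp [hc5]

lemma e4 : (5 + 2 * sqrt5C) * c5⁻¹ - γC * (-c5⁻¹) = lam * γC := by
  unfold lam
  field_simp [hc5]
  linear_combination hγ

lemma sigJ : (actHom sigmaMat).comp J = J.comp Ssig := by
  have E1 : (C (c5⁻¹) : Cxy) + C γC * C (c5⁻¹) = C lam' := by
    rw [← map_mul, ← map_add]; exact congrArg C e1
  have E2 : (C ((5 + 2 * sqrt5C) * c5⁻¹) : Cxy) + C γC * C (-c5⁻¹) = -(C lam' * C γC) := by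
    rw [← map_mul, ← map_add, ← map_mul, ← map_neg]; exact congrArg C e2
  have E3 : (C (c5⁻¹) : Cxy) - C γC * C (c5⁻¹) = C lam := by
    rw [← map_mul, ← map_sub]; exact congrArg C e3
  have E4 : (C ((5 + 2 * sqrt5C) * c5⁻¹) : Cxy) - C γC * C (-c5⁻¹) = C lam * C γC := by
    rw [← map_mul, ← map_sub, ← map_mul]; exact congrArg C e4
  apply algHom_ext
  rw [Fin.forall_fin_two]
  constructor <;>
    simp only [AlgHom.comp_apply, actHom, J, Ssig, aeval_X, map_mul, map_add, map_sub,
      Matrix.cons_val_zero, Matrix.cons_val_one, Matrix.head_cons, aeval_C, algebraMap_eq,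
      l1, l2] <;>
    rw [sig00, sig01, sig10, sig11]
  · linear_combination (X 0 : Cxy) * E1 + (X 1 : Cxy) * E2
  · linear_combination (X 0 : Cxy) * E3 + (X 1 : Cxy) * E4

lemma tau00 : ((tauMat 0 0 : ℝ) : ℂ) = 1 := by simp [tauMat]
lemma tau01 : ((tauMat 0 1 : ℝ) : ℂ) = 0 := by simp [tauMat]
lemma tau10 : ((tauMat 1 0 : ℝ) : ℂ) = 0 := by simp [tauMat]
lemma tau11 : ((tauMat 1 1 : ℝ) : ℂ) = -1 := by simp [tauMat]

lemma tauJ : (actHom tauMat).comp J = J.comp Stau := by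
  apply algHom_ext
  rw [Fin.forall_fin_two]
  constructor <;>
    simp only [AlgHom.comp_apply, actHom, J, Stau, aeval_X, map_mul, map_add, map_sub,
      Matrix.cons_val_zero, Matrix.cons_val_one, Matrix.head_cons, aeval_C, algebraMap_eq,
      l1, l2] <;>
    rw [tau00, tau01, tau10, tau11] <;>
    simp only [map_one, map_zero, map_neg] <;>
    ring

lemma rhoComp : Ssig.comp Stau = Srho := by
  apply algHom_ext
  rw [Fin.forall_fin_two]
  constructor <;>
    simp only [AlgHom.comp_apply, Ssig, Stau, Srho, aeval_X, map_mul,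
      Matrix.cons_val_zero, Matrix.cons_val_one, Matrix.head_cons, aeval_C, algebraMap_eq]

lemma mono_eq (u : Fin 2 →₀ ℕ) (c : ℂ) :
    (monomial u c : Cxy) = C c * X 0 ^ u 0 * X 1 ^ u 1 := by
  rw [monomial_eq]
  rw [Finsupp.prod_fintype _ _ (fun i => pow_zero (X i))]
  rw [Fin.prod_univ_two]
  ring

lemma aeval_mono (g : Fin 2 → Cxy) (u : Fin 2 →₀ ℕ) (c : ℂ) :
    aeval g (monomial u c) = C c * g 0 ^ u 0 * g 1 ^ u 1 := by
  rw [mono_eq]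
  simp only [map_mul, map_pow, aeval_X, aeval_C, algebraMap_eq]

lemma coeff_scale (s t : ℂ) (f : Cxy) (m : Fin 2 →₀ ℕ) :
    coeff m (aeval ![C s * X 0, C t * X 1] f) = s ^ m 0 * t ^ m 1 * coeff m f := by
  induction f using MvPolynomial.induction_on' with
  | monomial u a =>
    rw [aeval_mono]
    simp only [Matrix.cons_val_zero, Matrix.cons_val_one, Matrix.head_cons]
    rw [mul_pow, mul_pow, show (C s : Cxy) ^ u 0 = C (s ^ u 0) by rw [map_pow],
      show (C t : Cxy) ^ u 1 = C (t ^ u 1) by rw [map_pow]]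
    rw [show (C a : Cxy) * (C (s ^ u 0) * X 0 ^ u 0) * (C (t ^ u 1) * X 1 ^ u 1)
        = C (a * s ^ u 0 * t ^ u 1) * X 0 ^ u 0 * X 1 ^ u 1 by
      rw [map_mul, map_mul]; ring]
    rw [← mono_eq, coeff_monomial, coeff_monomial]
    by_cases h : u = m
    · subst h; simp; ring
    · simp [h]
  | add p q hp hq =>
    rw [map_add, coeff_add, hp, hq, coeff_add]
    ring

lemma hom_coeff {P : Cxy} {n : ℕ} (h : P.IsHomogeneous n) {m : Fin 2 →₀ ℕ}
    (hm : coeff m P ≠ 0) : m 0 + m 1 = n := by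
  have := h hm
  rw [Finsupp.weight_apply] at this
  rw [Finsupp.sum_fintype _ _ (fun i => by simp)] at this
  rw [Fin.sum_univ_two] at this
  simpa using this

lemma hCγ2 : (C γC : Cxy) ^ 2 = -C (5 + 2 * sqrt5C) := by
  rw [← map_pow, hγ, map_neg]

lemma g4 : γC ^ 4 = 45 + 20 * sqrt5C := by
  linear_combination (γC ^ 2 - (5 + 2 * sqrt5C)) * hγ + 4 * hs5

lemma F0 : (C (5 + 2 * sqrt5C) : Cxy) = -(C γC) ^ 2 := by rw [hCγ2]; ring

lemma F1 : (C (50 + 20 * sqrt5C) : Cxy) = -(10 : Cxy) * (C γC) ^ 2 := by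
  have h : (50 + 20 * sqrt5C : ℂ) = -10 * γC ^ 2 := by linear_combination 10 * hγ
  rw [h, map_mul, map_neg, map_pow, map_ofNat]

lemma F2 : (C (225 + 100 * sqrt5C) : Cxy) = (5 : Cxy) * (C γC) ^ 4 := by
  have h : (225 + 100 * sqrt5C : ℂ) = 5 * γC ^ 4 := by rw [g4]; ring
  rw [h, map_mul, map_pow, map_ofNat]

lemma I1 : W2q = l1 * l2 := by
  unfold W2q l1 l2
  rw [F0]
  ring

lemma I2 : l1 ^ 5 + l2 ^ 5 = 2 * psi5 := by
  unfold psi5 l1 l2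
  rw [F1, F2]
  ring

lemma hBne : (25 * (5 + 2 * sqrt5C) : ℂ) ≠ 0 := by
  have : (5 + 2 * sqrt5C : ℂ) = ((5 + 2 * Real.sqrt 5 : ℝ) : ℂ) := by
    unfold sqrt5C; push_cast; ring
  rw [this]
  intro h
  simp only [mul_eq_zero, OfNat.ofNat_ne_zero, false_or, Complex.ofReal_eq_zero] at h
  have : (0:ℝ) < 5 + 2 * Real.sqrt 5 := by positivity
  exact this.ne' h

lemma I3 : (l1 ^ 5 - l2 ^ 5) ^ 2 = C (100 * (5 + 2 * sqrt5C)) * W10' := by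
  unfold W10'
  rw [show (C (100 * (5 + 2 * sqrt5C)) : Cxy) * (C ((25 * (5 + 2 * sqrt5C))⁻¹) * (psi5 ^ 2 - W2q ^ 5))
      = (C (100 * (5 + 2 * sqrt5C)) * C ((25 * (5 + 2 * sqrt5C))⁻¹)) * (psi5 ^ 2 - W2q ^ 5) by ring,
    ← map_mul,
    show (100 * (5 + 2 * sqrt5C)) * (25 * (5 + 2 * sqrt5C))⁻¹ = (4 : ℂ) by
      have h5 : (5 + 2 * sqrt5C : ℂ) ≠ 0 := fun h => hBne (by rw [h, mul_zero])
      rw [mul_inv, mul_comm (25:ℂ)⁻¹, ← mul_assoc, mul_assoc (100:ℂ), mul_inv_cancel₀ h5]; norm_num,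
    map_ofNat]
  linear_combination (4 * (W2q ^ 4 + W2q ^ 3 * (l1 * l2) + W2q ^ 2 * (l1 * l2) ^ 2
      + W2q * (l1 * l2) ^ 3 + (l1 * l2) ^ 4)) * I1 + ((l1 ^ 5 + l2 ^ 5) + 2 * psi5) * I2

lemma I4 : l1 ^ 10 + l2 ^ 10 = C (100 * (5 + 2 * sqrt5C)) * W10' + 2 * W2q ^ 5 := by
  linear_combination I3 - 2 * (W2q ^ 4 + W2q ^ 3 * (l1 * l2) + W2q ^ 2 * (l1 * l2) ^ 2
      + W2q * (l1 * l2) ^ 3 + (l1 * l2) ^ 4) * I1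

lemma I5 : (l1 * l2) ^ 10 = W2q ^ 10 := by rw [← I1]

variable (μ ν : ℕ)

def gv (μ ν : ℕ) : Fin (μ + 1) → Cxy :=
  fun r => W2q ^ (5 * μ + ν - 5 * (r : ℕ)) * W10' ^ (r : ℕ)

def SP (μ ν : ℕ) : Submodule ℂ Cxy := Submodule.span ℂ (Set.range (gv μ ν))

lemma gen_mem {r : ℕ} (hr : r ≤ μ) :
    W2q ^ (5 * μ + ν - 5 * r) * W10' ^ r ∈ SP μ ν :=
  Submodule.subset_span ⟨⟨r, by omega⟩, rfl⟩

lemma key (hν : ν ≤ 4) :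
    ∀ k j b : ℕ, b + 5 * k + 5 * j = 5 * μ + ν →
      W2q ^ b * W10' ^ j * (l1 ^ (10 * k) + l2 ^ (10 * k)) ∈ SP μ ν := by
  intro k
  induction k using Nat.strong_induction_on with
  | _ k IH =>
    match k with
    | 0 =>
      intro j b hb
      have hj : j ≤ μ := by omega
      have hb' : b = 5 * μ + ν - 5 * j := by omega
      have heq : W2q ^ b * W10' ^ j * (l1 ^ (10 * 0) + l2 ^ (10 * 0))
          = (2 : ℂ) • (W2q ^ (5 * μ + ν - 5 * j) * W10' ^ j) := by
        rw [hb', smul_eq_C_mul, ← C2]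
        simp only [Nat.mul_zero, pow_zero]
        ring
      rw [heq]
      exact Submodule.smul_mem _ _ (gen_mem μ ν hj)
    | 1 =>
      intro j b hb
      have hj : j + 1 ≤ μ := by omega
      have heq : W2q ^ b * W10' ^ j * (l1 ^ (10 * 1) + l2 ^ (10 * 1))
          = (100 * (5 + 2 * sqrt5C)) • (W2q ^ (5 * μ + ν - 5 * (j+1)) * W10' ^ (j+1))
            + (2 : ℂ) • (W2q ^ (5 * μ + ν - 5 * j) * W10' ^ j) := by
        rw [smul_eq_C_mul, smul_eq_C_mul, ← C2,
          show 5 * μ + ν - 5 * (j+1) = b by omega, show 5 * μ + ν - 5 * j = b + 5 by omega,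
          show 10 * 1 = 10 by norm_num]
        linear_combination (W2q ^ b * W10' ^ j) * I4
      rw [heq]
      exact Submodule.add_mem _ (Submodule.smul_mem _ _ (gen_mem μ ν hj))
        (Submodule.smul_mem _ _ (gen_mem μ ν (by omega)))
    | (k + 2) =>
      intro j b hb
      have M1 := IH (k + 1) (by omega) (j + 1) b (by omega)
      have M2 := IH (k + 1) (by omega) j (b + 5) (by omega)
      have M3 := IH k (by omega) j (b + 10) (by omega)
      have heq : W2q ^ b * W10' ^ j * (l1 ^ (10 * (k + 2)) + l2 ^ (10 * (k + 2)))
          = (100 * (5 + 2 * sqrt5C)) •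
              (W2q ^ b * W10' ^ (j + 1) * (l1 ^ (10 * (k + 1)) + l2 ^ (10 * (k + 1))))
            + (2 : ℂ) • (W2q ^ (b + 5) * W10' ^ j * (l1 ^ (10 * (k + 1)) + l2 ^ (10 * (k + 1))))
            - W2q ^ (b + 10) * W10' ^ j * (l1 ^ (10 * k) + l2 ^ (10 * k)) := by
        rw [smul_eq_C_mul, smul_eq_C_mul, ← C2,
          show 10 * (k + 2) = 10 * k + 20 by ring, show 10 * (k + 1) = 10 * k + 10 by ring]
        linear_combination (W2q ^ b * W10' ^ j * (l1 ^ (10 * k + 10) + l2 ^ (10 * k + 10))) * I4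
          - (W2q ^ b * W10' ^ j * (l1 ^ (10 * k) + l2 ^ (10 * k))) * I5
      rw [heq]
      exact Submodule.sub_mem _
        (Submodule.add_mem _ (Submodule.smul_mem _ _ M1) (Submodule.smul_mem _ _ M2)) M3

lemma pair_core (hν : ν ≤ 4) (a b : ℕ) (hba : b ≤ a) (hab : a + b = 2 * (5 * μ + ν))
    (hmod : a % 5 = b % 5) : l1 ^ a * l2 ^ b + l1 ^ b * l2 ^ a ∈ SP μ ν := by
  obtain ⟨k, hk⟩ : ∃ k, a = b + 10 * k := by
    refine ⟨(a - b) / 10, ?_⟩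
    omega
  have hkey := key μ ν hν k 0 b (by omega)
  have heq : l1 ^ a * l2 ^ b + l1 ^ b * l2 ^ a
      = W2q ^ b * W10' ^ 0 * (l1 ^ (10 * k) + l2 ^ (10 * k)) := by
    have hWb : W2q ^ b = (l1 * l2) ^ b := by rw [I1]
    rw [hWb, hk, pow_zero]
    ring
  rw [heq]
  exact hkey

lemma pair_mem (hν : ν ≤ 4) (a b : ℕ) (hab : a + b = 2 * (5 * μ + ν))
    (hmod : a % 5 = b % 5) : l1 ^ a * l2 ^ b + l1 ^ b * l2 ^ a ∈ SP μ ν := by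
  rcases le_total b a with h | h
  · exact pair_core μ ν hν a b h hab hmod
  · have := pair_core μ ν hν b a h (by omega) hmod.symm
    rw [show l1 ^ a * l2 ^ b + l1 ^ b * l2 ^ a = l1 ^ b * l2 ^ a + l1 ^ a * l2 ^ b by ring]
    exact this

lemma lam'_eq : lam' = lam ^ 4 := by
  calc lam' = lam' * lam ^ 5 := by rw [lam5, mul_one]
    _ = lam * lam' * lam ^ 4 := by ring
    _ = lam ^ 4 := by rw [lam_mul, one_mul]

lemma mod5_of_scale {a b : ℕ} {c : ℂ} (hc : c ≠ 0)
    (h : lam ^ a * lam' ^ b * c = c) : a % 5 = b % 5 := by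
  have h1 : lam ^ a * lam' ^ b = 1 := by
    have h' : lam ^ a * lam' ^ b * c = 1 * c := by rw [one_mul]; exact h
    exact mul_right_cancel₀ hc h'
  rw [lam'_eq, ← pow_mul, ← pow_add] at h1
  have h2 := (lam_pow_eq_one_iff (a + 4 * b)).mp h1
  omega

lemma Kk_apply (f : Cxy) :
    Kk f = aeval ![C (2⁻¹ : ℂ) * (X 0 + X 1), C ((2 * γC)⁻¹) * (X 0 - X 1)] f := rfl

lemma Srho_apply (f : Cxy) : Srho f = aeval ![C lam * X 0, C lam' * X 1] f := rfl

lemma Kk_hom {f : Cxy} {n : ℕ} (hf : f.IsHomogeneous n) : (Kk f).IsHomogeneous n := by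
  have hg : ∀ i : Fin 2,
      ((![C (2⁻¹ : ℂ) * (X 0 + X 1), C ((2 * γC)⁻¹) * (X 0 - X 1)] : Fin 2 → Cxy) i).IsHomogeneous 1 := by
    rw [Fin.forall_fin_two]
    constructor
    · exact ((isHomogeneous_X _ _).add (isHomogeneous_X _ _)).C_mul _
    · exact ((isHomogeneous_X _ _).sub (isHomogeneous_X _ _)).C_mul _
  have h := hf.aeval _ hg
  rw [one_mul] at h
  rw [Kk_apply]
  exact h

end Inv9

theorem invariant_even_degree_decomposition (μ ν n : ℕ) (hν : ν ≤ 4)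
    (hn : n = 2 * (5 * μ + ν)) (A : ℕ → ℂ) (W : Cxy)
    (hW : W = MvPolynomial.X 0 ^ n +
      ∑ i ∈ Finset.Icc 1 n, MvPolynomial.C (A i) * MvPolynomial.X 0 ^ (n - i) *
        MvPolynomial.X 1 ^ i)
    (hσ : act sigmaMat W = W) (hτ : act tauMat W = W) :
    ∃ a : ℕ → ℂ, W = ∑ r ∈ Finset.range (μ + 1),
      MvPolynomial.C (a r) * W2q ^ (5 * μ + ν - 5 * r) * W10' ^ r := by
  classical
  open Inv9 MvPolynomial in
  obtain ⟨P, hJP⟩ : ∃ P : Cxy, J P = W :=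
    ⟨Kk W, by have h := congrArg (fun ψ : Cxy →ₐ[ℂ] Cxy => ψ W) JK; simpa using h⟩
  have hKJP : Kk (J P) = P := by
    have h := congrArg (fun ψ : Cxy →ₐ[ℂ] Cxy => ψ P) KJ
    simpa using h
  have hsig : Ssig P = P := by
    apply J_inj
    have h1 : actHom sigmaMat (J P) = J (Ssig P) := by
      have := congrArg (fun ψ : Cxy →ₐ[ℂ] Cxy => ψ P) sigJ
      simpa using this
    rw [← h1, hJP, ← act_eq, hσ]
  have htau : Stau P = P := by
    apply J_inj
    have h1 : actHom tauMat (J P) = J (Stau P) := by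
      have := congrArg (fun ψ : Cxy →ₐ[ℂ] Cxy => ψ P) tauJ
      simpa using this
    rw [← h1, hJP, ← act_eq, hτ]
  have hrho : Srho P = P := by
    rw [← rhoComp]
    show Ssig (Stau P) = P
    rw [htau, hsig]
  have hWhom : W.IsHomogeneous n := by
    rw [hW]
    apply MvPolynomial.IsHomogeneous.add (isHomogeneous_X_pow _ _)
    apply MvPolynomial.IsHomogeneous.sum
    intro i hi
    have hi' : i ≤ n := (Finset.mem_Icc.mp hi).2
    have h := ((isHomogeneous_X_pow (R := ℂ) (0 : Fin 2) (n - i)).mul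
      (isHomogeneous_X_pow (1 : Fin 2) i)).C_mul (A i)
    rw [show n - i + i = n by omega] at h
    rw [mul_assoc]
    exact h
  have hPhom : P.IsHomogeneous n := by
    rw [← hKJP, hJP]
    exact Kk_hom hWhom
  have hmem : W ∈ SP μ ν := by
    have h2 : (2 : ℂ) • W = J P + J (Stau P) := by
      rw [htau, hJP, two_smul]
    have hsum : J P + J (Stau P) =
        ∑ m ∈ P.support, (J (monomial m (coeff m P)) + J (Stau (monomial m (coeff m P)))) := by
      conv_lhs => rw [← support_sum_monomial_coeff P]
      rw [map_sum, map_sum, map_sum, ← Finset.sum_add_distrib]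
    have hWmem : (2 : ℂ) • W ∈ SP μ ν := by
      rw [h2, hsum]
      apply Submodule.sum_mem
      intro m hm
      have hcne := MvPolynomial.mem_support_iff.mp hm
      have hdeg : m 0 + m 1 = n := hom_coeff hPhom hcne
      have hscale : lam ^ m 0 * lam' ^ m 1 * coeff m P = coeff m P := by
        have h3 := coeff_scale lam lam' P m
        rw [← Srho_apply, hrho] at h3
        exact h3.symm
      have hmod := mod5_of_scale hcne hscale
      have hJm : J (monomial m (coeff m P)) = C (coeff m P) * l1 ^ m 0 * l2 ^ m 1 := by
        show aeval ![l1, l2] _ = _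
        rw [aeval_mono]
        simp only [Matrix.cons_val_zero, Matrix.cons_val_one, Matrix.head_cons]
      have hJm2 : J (Stau (monomial m (coeff m P))) = C (coeff m P) * l2 ^ m 0 * l1 ^ m 1 := by
        show aeval ![l1, l2] (aeval ![X 1, X 0] _) = _
        rw [aeval_mono]
        simp only [Matrix.cons_val_zero, Matrix.cons_val_one, Matrix.head_cons]
        rw [map_mul, map_mul, map_pow, map_pow, aeval_X, aeval_X, aeval_C]
        simp only [Matrix.cons_val_zero, Matrix.cons_val_one, Matrix.head_cons, algebraMap_eq]
      rw [hJm, hJm2,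
        show C (coeff m P) * l1 ^ m 0 * l2 ^ m 1 + C (coeff m P) * l2 ^ m 0 * l1 ^ m 1
          = coeff m P • (l1 ^ m 0 * l2 ^ m 1 + l1 ^ m 1 * l2 ^ m 0) by
            rw [smul_eq_C_mul]; ring]
      exact Submodule.smul_mem _ _ (pair_mem μ ν hν (m 0) (m 1) (by omega) hmod)
    have hW2 : W = (2⁻¹ : ℂ) • ((2 : ℂ) • W) := by
      rw [smul_smul]; norm_num
    rw [hW2]
    exact Submodule.smul_mem _ _ hWmem
  rw [SP, Submodule.mem_span_range_iff_exists_fun] at hmem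
  obtain ⟨c, hc⟩ := hmem
  refine ⟨fun r => if h : r < μ + 1 then c ⟨r, h⟩ else 0, ?_⟩
  rw [← hc, ← Fin.sum_univ_eq_sum_range]
  apply Finset.sum_congr rfl
  intro i _
  have hb : (fun r => if h : r < μ + 1 then c ⟨r, h⟩ else 0) (i : ℕ) = c i := by
    simp [i.isLt]
  rw [hb]
  unfold Inv9.gv
  rw [MvPolynomial.smul_eq_C_mul, mul_assoc]

end
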